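/- Let f satisfy condition (F) with constants 0 < m ≤ M, let F(t) = ∫₀^t f(s) ds, and let φ(t) = ∫_t^∞ ds/√(F(s)). Then for all t > 0: (m/2) · φ(t)/t ≤ |φ'(t)| ≤ (M/2) · φ(t)/t, where φ'(t) = -1/√(F(t)). -/

import Mathlib

open Set MeasureTheory Filter

private theorem vdb_aux_pos_of_deriv (G G' : ℝ → ℝ)
    (hG' : ∀ s > (0:ℝ), HasDerivAt G (G' s) s)
    (hnn : ∀ s > (0:ℝ), 0 ≤ G' s)
    (h0 : Tendsto G (nhdsWithin 0 (Ioi 0)) (nhds 0)) :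
    ∀ t > (0:ℝ), 0 ≤ G t := by
  intro t ht
  have hmono : ∀ ε ∈ Ioo (0:ℝ) t, G ε ≤ G t := by
    intro ε hε
    have hmon : MonotoneOn G (Icc ε t) := by
      apply monotoneOn_of_deriv_nonneg (convex_Icc ε t)
      · exact fun s hs => ((hG' s (lt_of_lt_of_le hε.1 hs.1)).continuousAt).continuousWithinAt
      · intro s hs
        rw [interior_Icc] at hs
        exact ((hG' s (hε.1.trans hs.1)).differentiableAt).differentiableWithinAt
      · intro s hs
        rw [interior_Icc] at hs
        rw [(hG' s (hε.1.trans hs.1)).deriv]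
        exact hnn s (hε.1.trans hs.1)
    exact hmon ⟨le_rfl, hε.2.le⟩ ⟨hε.2.le, le_rfl⟩ hε.2.le
  refine le_of_tendsto h0 ?_
  filter_upwards [Ioo_mem_nhdsGT_of_mem (by simp [ht] : (0:ℝ) ∈ Ico 0 t)] with ε hε
  exact hmono ε hε

private theorem vdb_aux_le_zero (R R' : ℝ → ℝ) (t : ℝ)
    (hd : ∀ s ∈ Ici t, HasDerivAt R (R' s) s) (hnn : ∀ s ∈ Ioi t, 0 ≤ R' s)
    (h0 : Tendsto R atTop (nhds 0)) : R t ≤ 0 := by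
  have hmono : MonotoneOn R (Ici t) := by
    apply monotoneOn_of_deriv_nonneg (convex_Ici t)
    · exact fun s hs => ((hd s hs).continuousAt).continuousWithinAt
    · intro s hs
      rw [interior_Ici] at hs
      exact ((hd s (mem_Ici.2 (mem_Ioi.1 hs).le)).differentiableAt).differentiableWithinAt
    · intro s hs
      rw [interior_Ici] at hs
      rw [(hd s (mem_Ici.2 (mem_Ioi.1 hs).le)).deriv]
      exact hnn s hs
  apply ge_of_tendsto h0
  filter_upwards [eventually_ge_atTop t] with T hT
  exact hmono self_mem_Ici hT hT

private theorem vdb_aux_grow (f F : ℝ → ℝ) (m : ℝ)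
    (hF' : ∀ t > (0:ℝ), HasDerivAt F (f t) t)
    (htf : ∀ t > (0:ℝ), (2+m) * F t ≤ t * f t) :
    ∀ s ≥ (1:ℝ), F 1 * s ^ ((2:ℝ)+m) ≤ F s := by
  set p : ℝ := -(2+m) with hp
  have hd : ∀ s > (0:ℝ), HasDerivAt (fun x => F x * x ^ p)
      (f s * s ^ p + F s * (p * s ^ (p-1))) s := by
    intro s hs
    exact (hF' s hs).mul (Real.hasDerivAt_rpow_const (Or.inl hs.ne'))
  have hmono : MonotoneOn (fun x => F x * x ^ p) (Ici 1) := by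
    apply monotoneOn_of_deriv_nonneg (convex_Ici 1)
    · exact fun s hs => ((hd s (lt_of_lt_of_le one_pos hs)).continuousAt).continuousWithinAt
    · intro s hs
      rw [interior_Ici] at hs
      exact ((hd s (lt_trans one_pos hs)).differentiableAt).differentiableWithinAt
    · intro s hs
      rw [interior_Ici] at hs
      have hs0 : (0:ℝ) < s := lt_trans one_pos hs
      rw [(hd s hs0).deriv]
      have key : f s * s ^ p + F s * (p * s ^ (p-1)) =
          s ^ (p-1) * (s * f s - (2+m) * F s) := by
        have h1 : s ^ p = s ^ (p-1) * s := by
          rw [← Real.rpow_add_one hs0.ne' (p-1)]; ring_nf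
        rw [h1, hp]; ring
      rw [key]
      exact mul_nonneg (Real.rpow_pos_of_pos hs0 _).le (by linarith [htf s hs0])
  intro s hs
  have := hmono (self_mem_Ici) hs hs
  simp only [Real.one_rpow, mul_one] at this
  have hs0 : (0:ℝ) < s := lt_of_lt_of_le one_pos hs
  have hsp : s ^ p = (s ^ ((2:ℝ)+m))⁻¹ := by
    rw [hp, Real.rpow_neg hs0.le]
  rw [hsp] at this
  have h2 : (0:ℝ) < s ^ ((2:ℝ)+m) := Real.rpow_pos_of_pos hs0 _
  calc F 1 * s ^ ((2:ℝ)+m) ≤ (F s * (s ^ ((2:ℝ)+m))⁻¹) * s ^ ((2:ℝ)+m) := by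
        apply mul_le_mul_of_nonneg_right this h2.le
    _ = F s := by field_simp

private theorem vdb_aux_gto (F : ℝ → ℝ) (m : ℝ) (hm : 0 < m) (hF1 : 0 < F 1)
    (hgrow : ∀ s ≥ (1:ℝ), F 1 * s ^ ((2:ℝ)+m) ≤ F s) :
    Tendsto (fun s => s / Real.sqrt (F s)) atTop (nhds 0) := by
  have hbound : ∀ s ≥ (1:ℝ), s / Real.sqrt (F s) ≤ (Real.sqrt (F 1))⁻¹ * s ^ (-(m/2)) := by
    intro s hs
    have hs0 : (0:ℝ) < s := lt_of_lt_of_le one_pos hs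
    have h1 : Real.sqrt (F 1) * s ^ (((2:ℝ)+m)/2) ≤ Real.sqrt (F s) := by
      have := Real.sqrt_le_sqrt (hgrow s hs)
      rwa [Real.sqrt_mul hF1.le, Real.sqrt_eq_rpow (s ^ ((2:ℝ)+m)), ← Real.rpow_mul hs0.le,
        show ((2:ℝ)+m) * (1/2) = ((2:ℝ)+m)/2 by ring] at this
    have hden : (0:ℝ) < Real.sqrt (F 1) * s ^ (((2:ℝ)+m)/2) :=
      mul_pos (Real.sqrt_pos.2 hF1) (Real.rpow_pos_of_pos hs0 _)
    calc s / Real.sqrt (F s) ≤ s / (Real.sqrt (F 1) * s ^ (((2:ℝ)+m)/2)) :=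
          div_le_div_of_nonneg_left hs0.le hden h1
      _ = (Real.sqrt (F 1))⁻¹ * (s / s ^ (((2:ℝ)+m)/2)) := by ring
      _ = (Real.sqrt (F 1))⁻¹ * s ^ (-(m/2)) := by
          congr 1
          rw [show s / s ^ (((2:ℝ)+m)/2) = s ^ (1:ℝ) / s ^ (((2:ℝ)+m)/2) by rw [Real.rpow_one],
            ← Real.rpow_sub hs0]
          congr 1; ring
  have hlim : Tendsto (fun s : ℝ => (Real.sqrt (F 1))⁻¹ * s ^ (-(m/2))) atTop (nhds 0) := by
    have := (tendsto_rpow_neg_atTop (by linarith : 0 < m/2)).const_mul (Real.sqrt (F 1))⁻¹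
    simpa using this
  apply tendsto_of_tendsto_of_tendsto_of_le_of_le' tendsto_const_nhds hlim
  · filter_upwards [eventually_ge_atTop (1:ℝ)] with s hs
    exact div_nonneg (by linarith) (Real.sqrt_nonneg _)
  · filter_upwards [eventually_ge_atTop (1:ℝ)] with s hs
    exact hbound s hs

private theorem vdb_aux_integrable (F : ℝ → ℝ) (m : ℝ) (hm : 0 < m) (hF1 : 0 < F 1)
    (hFc : ContinuousOn F (Ioi 0))
    (hgrow : ∀ s ≥ (1:ℝ), F 1 * s ^ ((2:ℝ)+m) ≤ F s)
    (hFpos : ∀ s > (0:ℝ), 0 < F s) :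
    ∀ t > (0:ℝ), IntegrableOn (fun s => (F s) ^ (-(1:ℝ)/2)) (Ioi t) := by
  have hψc : ContinuousOn (fun s => (F s) ^ (-(1:ℝ)/2)) (Ioi 0) :=
    hFc.rpow_const (fun x hx => Or.inl (hFpos x hx).ne')
  have hInt1 : IntegrableOn (fun s => (F s) ^ (-(1:ℝ)/2)) (Ioi 1) := by
    have hdom : IntegrableOn (fun s : ℝ => (F 1) ^ (-(1:ℝ)/2) * s ^ (-(((2:ℝ)+m)/2))) (Ioi 1) :=
      (integrableOn_Ioi_rpow_of_lt (by linarith) one_pos).const_mul _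
    apply Integrable.mono' hdom
      ((hψc.mono (fun x (hx : x ∈ Ioi (1:ℝ)) => mem_Ioi.2 (lt_trans one_pos (mem_Ioi.1 hx)))).aestronglyMeasurable
        measurableSet_Ioi)
    filter_upwards [ae_restrict_mem measurableSet_Ioi] with s hs
    have hs1 : (1:ℝ) ≤ s := le_of_lt hs
    have hs0 : (0:ℝ) < s := lt_of_lt_of_le one_pos hs1
    have hFs : 0 < F s := hFpos s hs0
    rw [Real.norm_eq_abs, abs_of_nonneg (Real.rpow_nonneg hFs.le _)]
    calc (F s) ^ (-(1:ℝ)/2) ≤ (F 1 * s ^ ((2:ℝ)+m)) ^ (-(1:ℝ)/2) := by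
          apply Real.rpow_le_rpow_of_nonpos (mul_pos hF1 (Real.rpow_pos_of_pos hs0 _))
            (hgrow s hs1) (by norm_num)
      _ = (F 1) ^ (-(1:ℝ)/2) * s ^ (-(((2:ℝ)+m)/2)) := by
          rw [Real.mul_rpow hF1.le (Real.rpow_pos_of_pos hs0 _).le, ← Real.rpow_mul hs0.le]
          congr 2
          ring
  intro t ht
  rcases le_or_gt 1 t with h1t | ht1
  · exact hInt1.mono_set (Ioi_subset_Ioi h1t)
  · have h2 : IntegrableOn (fun s => (F s) ^ (-(1:ℝ)/2)) (Ioc t 1) :=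
      ((hψc.mono (fun x hx => lt_of_lt_of_le ht hx.1)).integrableOn_Icc).mono_set
        Ioc_subset_Icc_self
    have := h2.union hInt1
    rwa [Ioc_union_Ioi_eq_Ioi ht1.le] at this

private theorem vdb_aux_phi0 (F φ : ℝ → ℝ)
    (hφdef : ∀ t > (0:ℝ), φ t = ∫ s in Set.Ioi t, (F s) ^ (-(1:ℝ)/2))
    (hInt : ∀ t > (0:ℝ), IntegrableOn (fun s => (F s) ^ (-(1:ℝ)/2)) (Ioi t)) :
    Tendsto φ atTop (nhds 0) := by
  set ψ : ℝ → ℝ := fun s => (F s) ^ (-(1:ℝ)/2) with hψ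
  have key : ∀ T ≥ (1:ℝ), φ T = φ 1 - ∫ s in (1:ℝ)..T, ψ s := by
    intro T hT
    have hsplit : ∫ s in Ioi (1:ℝ), ψ s = (∫ s in Ioc 1 T, ψ s) + ∫ s in Ioi T, ψ s := by
      rw [← setIntegral_union (Ioc_disjoint_Ioi le_rfl) measurableSet_Ioi
        ((hInt 1 one_pos).mono_set Ioc_subset_Ioi_self)
        ((hInt 1 one_pos).mono_set (Ioi_subset_Ioi hT)), Ioc_union_Ioi_eq_Ioi hT]
    rw [hφdef T (lt_of_lt_of_le one_pos hT), hφdef 1 one_pos,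
      intervalIntegral.integral_of_le hT, hsplit]
    ring
  have hlim : Tendsto (fun T => φ 1 - ∫ s in (1:ℝ)..T, ψ s) atTop (nhds 0) := by
    have := intervalIntegral_tendsto_integral_Ioi 1 (hInt 1 one_pos) tendsto_id
    rw [← hφdef 1 one_pos] at this
    simpa using (tendsto_const_nhds (x := φ 1)).sub this
  apply hlim.congr'
  filter_upwards [eventually_ge_atTop (1:ℝ)] with T hT
  exact (key T hT).symm

theorem varphi_deriv_bounds (f F φ : ℝ → ℝ) (m M : ℝ) (hm : 0 < m) (hmM : m ≤ M)
    (hf : ContDiffOn ℝ 1 f (Set.Ioi 0)) (hfpos : ∀ t > (0:ℝ), 0 < f t)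
    (hf0 : Filter.Tendsto f (nhdsWithin 0 (Set.Ioi 0)) (nhds 0))
    (hFcond : ∀ t > (0:ℝ), (1 + m) * f t ≤ t * deriv f t ∧ t * deriv f t ≤ (1 + M) * f t)
    (hFdef : ∀ t > (0:ℝ), F t = ∫ s in (0:ℝ)..t, f s)
    (hφdef : ∀ t > (0:ℝ), φ t = ∫ s in Set.Ioi t, (F s) ^ (-(1:ℝ)/2))
    (hφanti : StrictAntiOn φ (Set.Ioi 0))
    (hφ' : ∀ t > (0:ℝ), HasDerivAt φ (-(1 / Real.sqrt (F t))) t) :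
    ∀ t > (0:ℝ), (m / 2) * (φ t / t) ≤ |(-(1 / Real.sqrt (F t)))| ∧
      |(-(1 / Real.sqrt (F t)))| ≤ (M / 2) * (φ t / t) := by
  have hfc : ContinuousOn f (Ioi 0) := hf.continuousOn
  -- bound on f near 0
  obtain ⟨δ, hδ, hb⟩ : ∃ δ > 0, ∀ s ∈ Ioo (0:ℝ) δ, |f s| ≤ 1 := by
    have := (hf0.eventually (eventually_abs_sub_lt 0 one_pos))
    rw [eventually_nhdsWithin_iff, Metric.eventually_nhds_iff] at this
    obtain ⟨ε, hε, h⟩ := this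
    refine ⟨ε, hε, fun s hs => ?_⟩
    have := h (show dist s 0 < ε by simpa [Real.dist_eq, abs_of_pos hs.1] using hs.2) hs.1
    simpa using le_of_lt this
  -- integrability of f near 0
  have hint : ∀ t > (0:ℝ), IntegrableOn f (Ioc 0 t) := by
    intro t ht
    set a := min (δ/2) t with ha
    have ha0 : 0 < a := lt_min (by linarith) ht
    have h1 : IntegrableOn f (Ioc 0 a) := by
      refine ⟨(hfc.mono (fun x hx => hx.1)).aestronglyMeasurable measurableSet_Ioc, ?_⟩
      apply HasFiniteIntegral.restrict_of_bounded (C := 1) (by simp [ha0.ne'])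
      filter_upwards [ae_restrict_mem measurableSet_Ioc] with s hs
      exact hb s ⟨hs.1, lt_of_le_of_lt hs.2 (lt_of_le_of_lt (min_le_left _ _) (by linarith))⟩
    have h2 : IntegrableOn f (Ioc a t) := by
      apply ((hfc.mono ?_).integrableOn_Icc).mono_set Ioc_subset_Icc_self
      exact fun x hx => lt_of_lt_of_le ha0 hx.1
    simpa [Ioc_union_Ioc_eq_Ioc ha0.le (min_le_right _ _)] using h1.union h2
  -- FTC : F' = f on (0,∞)
  have hF' : ∀ t > (0:ℝ), HasDerivAt F (f t) t := by
    intro t ht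
    have hii : IntervalIntegrable f volume 0 t := by
      rw [intervalIntegrable_iff_integrableOn_Ioc_of_le ht.le]; exact hint t ht
    have h := intervalIntegral.integral_hasDerivAt_right hii
      (hfc.stronglyMeasurableAtFilter isOpen_Ioi t ht)
      (hfc.continuousAt (isOpen_Ioi.mem_nhds ht))
    apply h.congr_of_eventuallyEq
    filter_upwards [isOpen_Ioi.mem_nhds ht] with s hs
    exact hFdef s hs
  -- F positive
  have hFpos : ∀ t > (0:ℝ), 0 < F t := by
    intro t ht
    rw [hFdef t ht]
    have hii : IntervalIntegrable f volume 0 t := by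
      rw [intervalIntegrable_iff_integrableOn_Ioc_of_le ht.le]; exact hint t ht
    exact intervalIntegral.intervalIntegral_pos_of_pos_on hii (fun x hx => hfpos x hx.1) ht
  -- F → 0 at 0+
  have hF0 : Tendsto F (nhdsWithin 0 (Ioi 0)) (nhds 0) := by
    have key : ∀ t ∈ Ioo (0:ℝ) δ, |F t| ≤ t := by
      intro t htd
      rw [hFdef t htd.1, intervalIntegral.integral_of_le htd.1.le]
      calc |∫ s in Ioc 0 t, f s| ≤ 1 * (volume (Ioc 0 t)).toReal := by
            rw [← Real.norm_eq_abs]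
            apply norm_setIntegral_le_of_norm_le_const
            · simp [htd.1.ne']
            · intro s hs
              rw [Real.norm_eq_abs]; exact hb s ⟨hs.1, hs.2.trans_lt htd.2⟩
        _ = t := by simp [htd.1.le]
    rw [Metric.tendsto_nhdsWithin_nhds]
    intro ε hε
    refine ⟨min δ ε, lt_min hδ hε, fun {x} hx hd => ?_⟩
    rw [Real.dist_eq, sub_zero, abs_of_pos hx] at hd
    rw [Real.dist_eq, sub_zero]
    exact lt_of_le_of_lt (key x ⟨hx, hd.trans_le (min_le_left _ _)⟩)
      (hd.trans_le (min_le_right _ _))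
  -- integrated inequality : (2+m) F ≤ t f ≤ (2+M) F
  have htf : ∀ t > (0:ℝ), (2+m) * F t ≤ t * f t ∧ t * f t ≤ (2+M) * F t := by
    have hfd : ∀ s > (0:ℝ), HasDerivAt f (deriv f s) s := fun s hs =>
      ((hf.differentiableOn one_ne_zero s hs).differentiableAt (isOpen_Ioi.mem_nhds hs)).hasDerivAt
    have hid : Tendsto (fun s : ℝ => s) (nhdsWithin 0 (Ioi 0)) (nhds 0) :=
      tendsto_id.mono_left nhdsWithin_le_nhds
    have hsf : Tendsto (fun s => s * f s) (nhdsWithin 0 (Ioi 0)) (nhds 0) := by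
      simpa using hid.mul hf0
    intro t ht
    constructor
    · have := vdb_aux_pos_of_deriv (fun s => s * f s - (2+m) * F s)
        (fun s => (1 * f s + s * deriv f s) - (2+m) * f s)
        (fun s hs => (((hasDerivAt_id s).mul (hfd s hs)).sub ((hF' s hs).const_mul (2+m))))
        (fun s hs => by
          have := (hFcond s hs).1; ring_nf; ring_nf at this; linarith)
        (by simpa using hsf.sub (hF0.const_mul (2+m))) t ht
      linarith
    · have := vdb_aux_pos_of_deriv (fun s => (2+M) * F s - s * f s)
        (fun s => (2+M) * f s - (1 * f s + s * deriv f s))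
        (fun s hs => (((hF' s hs).const_mul (2+M)).sub ((hasDerivAt_id s).mul (hfd s hs))))
        (fun s hs => by
          have := (hFcond s hs).2; ring_nf; ring_nf at this; linarith)
        (by simpa using (hF0.const_mul (2+M)).sub hsf) t ht
      linarith
  have hF1 : 0 < F 1 := hFpos 1 one_pos
  have hFc : ContinuousOn F (Ioi 0) := fun s hs =>
    ((hF' s hs).differentiableAt.continuousAt).continuousWithinAt
  have hgrow := vdb_aux_grow f F m hF' (fun t ht => (htf t ht).1)
  have hg0 : Tendsto (fun s => s / Real.sqrt (F s)) atTop (nhds 0) :=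
    vdb_aux_gto F m hm hF1 hgrow
  have hInt := vdb_aux_integrable F m hm hF1 hFc hgrow hFpos
  have hφ0 : Tendsto φ atTop (nhds 0) := vdb_aux_phi0 F φ hφdef hInt
  -- derivative of g
  have hgd : ∀ s > (0:ℝ), HasDerivAt (fun x => x / Real.sqrt (F x))
      ((1 * Real.sqrt (F s) - s * (1 / (2 * Real.sqrt (F s)) * f s)) / (Real.sqrt (F s))^2) s := by
    intro s hs
    have hsq : HasDerivAt (fun x => Real.sqrt (F x)) (1 / (2 * Real.sqrt (F s)) * f s) s :=
      (Real.hasDerivAt_sqrt (hFpos s hs).ne').comp s (hF' s hs)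
    exact (hasDerivAt_id s).div hsq (Real.sqrt_pos.2 (hFpos s hs)).ne'
  intro t ht
  have hqt : 0 < Real.sqrt (F t) := Real.sqrt_pos.2 (hFpos t ht)
  -- lower bound : (m/2) φ t ≤ t / √(F t)
  have hlow : m / 2 * φ t - t / Real.sqrt (F t) ≤ 0 := by
    apply vdb_aux_le_zero (fun s => m / 2 * φ s - s / Real.sqrt (F s))
      (fun s => m / 2 * (-(1 / Real.sqrt (F s))) -
        (1 * Real.sqrt (F s) - s * (1 / (2 * Real.sqrt (F s)) * f s)) / (Real.sqrt (F s))^2) t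
    · intro s hs
      have hs0 : 0 < s := lt_of_lt_of_le ht hs
      exact ((hφ' s hs0).const_mul (m/2)).sub (hgd s hs0)
    · intro s hs
      have hs0 : 0 < s := ht.trans hs
      have hq : 0 < Real.sqrt (F s) := Real.sqrt_pos.2 (hFpos s hs0)
      have h2 : (Real.sqrt (F s))^2 = F s := Real.sq_sqrt (hFpos s hs0).le
      have h := (htf s hs0).1
      set q := Real.sqrt (F s)
      have key : m / 2 * (-(1 / q)) -
          (1 * q - s * (1 / (2 * q) * f s)) / q ^ 2
          = (s * f s - (2+m) * q^2) / (2 * q^3) := by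
        field_simp
        ring
      rw [key]
      apply div_nonneg _ (by positivity)
      rw [h2]; linarith
    · have := (hφ0.const_mul (m/2)).sub hg0
      simpa using this
  -- upper bound : t / √(F t) ≤ (M/2) φ t
  have hup : t / Real.sqrt (F t) - M / 2 * φ t ≤ 0 := by
    apply vdb_aux_le_zero (fun s => s / Real.sqrt (F s) - M / 2 * φ s)
      (fun s => (1 * Real.sqrt (F s) - s * (1 / (2 * Real.sqrt (F s)) * f s)) /
        (Real.sqrt (F s))^2 - M / 2 * (-(1 / Real.sqrt (F s)))) t
    · intro s hs
      have hs0 : 0 < s := lt_of_lt_of_le ht hs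
      exact (hgd s hs0).sub ((hφ' s hs0).const_mul (M/2))
    · intro s hs
      have hs0 : 0 < s := ht.trans hs
      have hq : 0 < Real.sqrt (F s) := Real.sqrt_pos.2 (hFpos s hs0)
      have h2 : (Real.sqrt (F s))^2 = F s := Real.sq_sqrt (hFpos s hs0).le
      have h := (htf s hs0).2
      set q := Real.sqrt (F s)
      have key : (1 * q - s * (1 / (2 * q) * f s)) / q ^ 2 - M / 2 * (-(1 / q))
          = ((2+M) * q^2 - s * f s) / (2 * q^3) := by
        field_simp
        ring
      rw [key]
      apply div_nonneg _ (by positivity)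
      rw [h2]; linarith
    · have := hg0.sub (hφ0.const_mul (M/2))
      simpa using this
  rw [abs_neg, abs_of_nonneg (by positivity : (0:ℝ) ≤ 1 / Real.sqrt (F t))]
  constructor
  · rw [show m / 2 * (φ t / t) = (m / 2 * φ t) / t by ring,
      div_le_iff₀ ht]
    calc m / 2 * φ t ≤ t / Real.sqrt (F t) := by linarith
      _ = 1 / Real.sqrt (F t) * t := by ring
  · rw [show M / 2 * (φ t / t) = (M / 2 * φ t) / t by ring,
      le_div_iff₀ ht]
    calc 1 / Real.sqrt (F t) * t = t / Real.sqrt (F t) := by ring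
      _ ≤ M / 2 * φ t := by linarith
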